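/- Let p1, p7 ∈ ℂ[v,y] ⊂ S, q1, q7 ∈ ℂ[v] ⊂ S and k1, k7 ∈ ℂ. Set E1 = (−v²y² + p1·t)∂_y + q1·t·∂_v + k1·t·∂_t and E7 = (2vy + p7·t)∂_y + (−v² + q7·t)∂_v + k7·t·∂_t. If [E1,E7] ≡ 0 (mod t²), then −2v·q1 + v²·∂_v q1 + k1·q7 − k7·q1 = 0 in ℂ[v]; in particular, if k1 = k7 = 0 this gives −2v·q1 + v²·∂_v q1 = 0. -/
import Mathlib

open MvPolynomial

noncomputable section

/-- `S = ℂ[v,y,t]` with `v = X 0`, `y = X 1`, `t = X 2`. -/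
abbrev S : Type := MvPolynomial (Fin 3) ℂ

/-- The variable `v`. -/ def V : S := X 0
/-- The variable `y`. -/ def Y : S := X 1
/-- The variable `t`. -/ def T : S := X 2

/-- The derivation `f ∂_y + g ∂_v + h ∂_t` of `S = ℂ[v,y,t]`, determined by
`y ↦ f`, `v ↦ g`, `t ↦ h`. -/
def der (f g h : S) : Derivation ℂ S S :=
  MvPolynomial.mkDerivation ℂ ![g, f, h]

/-- The inclusion `ℂ[v,y] ⊂ S` (where in `ℂ[v,y]` the variable `X 0` is `v`
and `X 1` is `y`). -/
def ι2 : MvPolynomial (Fin 2) ℂ →ₐ[ℂ] S := aeval ![V, Y]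

/-- The inclusion `ℂ[v] ⊂ S`. -/
def ι1 : Polynomial ℂ →ₐ[ℂ] S := Polynomial.aeval V

/-- `D ≡ D' (mod t²)`: the difference sends `y`, `v`, `t` into the ideal `(t²)`. -/
def ModT2 (D D' : Derivation ℂ S S) : Prop :=
  ∀ i : Fin 3, (D - D') (X i) ∈ Ideal.span {T ^ 2}

lemma der_V (f g h : S) : der f g h V = g := by
  simp [der, V, MvPolynomial.mkDerivation_X]

lemma der_T (f g h : S) : der f g h T = h := by
  simp [der, T, MvPolynomial.mkDerivation_X]

lemma der_ι1 (f g h : S) (q : Polynomial ℂ) :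
    der f g h (ι1 q) = ι1 (Polynomial.derivative q) * g := by
  rw [show ι1 q = Polynomial.aeval V q from rfl, Derivation.map_aeval, der_V, smul_eq_mul]
  rfl

theorem bracket_E1_E7 (p1 p7 : MvPolynomial (Fin 2) ℂ) (q1 q7 : Polynomial ℂ)
    (k1 k7 : ℂ) (E1 E7 : Derivation ℂ S S)
    (hE1 : E1 = der (-V ^ 2 * Y ^ 2 + ι2 p1 * T) (ι1 q1 * T) (C k1 * T))
    (hE7 : E7 = der (2 * V * Y + ι2 p7 * T) (-V ^ 2 + ι1 q7 * T) (C k7 * T))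
    (h : ModT2 ⁅E1, E7⁆ 0) :
    (-2 * Polynomial.X * q1 + Polynomial.X ^ 2 * Polynomial.derivative q1 +
        Polynomial.C k1 * q7 - Polynomial.C k7 * q1 = 0) ∧
      (k1 = 0 → k7 = 0 →
        -2 * Polynomial.X * q1 + Polynomial.X ^ 2 * Polynomial.derivative q1 = 0) := by
  set P : Polynomial ℂ := -2 * Polynomial.X * q1 + Polynomial.X ^ 2 * Polynomial.derivative q1 +
      Polynomial.C k1 * q7 - Polynomial.C k7 * q1 with hP
  suffices hmain : P = 0 by
    refine ⟨hmain, fun h1 h7 => ?_⟩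
    have := hmain
    rw [hP, h1, h7] at this
    simpa using this
  -- the bracket applied to `v`
  have h0 := h 0
  rw [sub_zero] at h0
  have hXV : (X 0 : S) = V := rfl
  rw [Derivation.commutator_apply, hXV, hE1, hE7] at h0
  set W : S := ι1 (Polynomial.derivative q7) * ι1 q1 - ι1 (Polynomial.derivative q1) * ι1 q7
    with hW
  have key : der (-V ^ 2 * Y ^ 2 + ι2 p1 * T) (ι1 q1 * T) (C k1 * T)
        ((der (2 * V * Y + ι2 p7 * T) (-V ^ 2 + ι1 q7 * T) (C k7 * T)) V) -
      der (2 * V * Y + ι2 p7 * T) (-V ^ 2 + ι1 q7 * T) (C k7 * T)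
        ((der (-V ^ 2 * Y ^ 2 + ι2 p1 * T) (ι1 q1 * T) (C k1 * T)) V)
      = (ι1 P + W * T) * T := by
    rw [der_V, der_V, map_add, Derivation.leibniz, Derivation.map_neg, Derivation.leibniz_pow,
      Derivation.leibniz, der_V, der_T, der_T, der_ι1, der_ι1]
    have hιP : ι1 P = -2 * V * ι1 q1 + V ^ 2 * ι1 (Polynomial.derivative q1) +
        C k1 * ι1 q7 - C k7 * ι1 q1 := by
      have hC : ∀ c : ℂ, ι1 (Polynomial.C c) = C c := fun c => by
        simp [ι1, MvPolynomial.algebraMap_eq]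
      have hX : ι1 Polynomial.X = V := by simp [ι1]
      rw [hP]
      simp only [map_add, map_sub, map_mul, map_neg, map_pow, map_ofNat, hC, hX]
    rw [hιP, hW]
    simp only [smul_eq_mul]
    push_cast
    ring
  rw [key] at h0
  obtain ⟨c, hc⟩ := Ideal.mem_span_singleton.mp h0
  rw [show T ^ 2 * c = (T * c) * T by ring] at hc
  have hT : (T : S) ≠ 0 := by
    simpa [T] using MvPolynomial.X_ne_zero (R := ℂ) (2 : Fin 3)
  have hc' : ι1 P + W * T = T * c := mul_right_cancel₀ hT hc
  -- evaluate at `y = 0, t = 0`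
  set φ : S →ₐ[ℂ] Polynomial ℂ := aeval ![Polynomial.X, 0, 0] with hφ
  have hφT : φ T = 0 := by simp [hφ, T]
  have hφι1 : ∀ q : Polynomial ℂ, φ (ι1 q) = q := fun q => by
    rw [ι1, ← Polynomial.aeval_algHom_apply]
    simp [hφ, V]
  have := congrArg φ hc'
  rw [map_add, map_mul, map_mul, hφT, hφι1] at this
  simpa using this

end
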